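/- Let θ ≥ 1/2 be real. Then for every square-summable real sequence (ξ_k)_{k∈ℤ≥0} the double series Σ_{j=0}^∞ Σ_{k=0}^∞ ξ_j ξ_k/(j+k+θ) converges and satisfies 0 ≤ Σ_{j,k} ξ_j ξ_k/(j+k+θ) ≤ π·Σ_{k=0}^∞ ξ_k². Moreover the constant π is best possible: for every C < π there exists a square-summable real sequence (ξ_k), not identically zero, with Σ_{j,k} ξ_j ξ_k/(j+k+θ) > C·Σ_k ξ_k². -/

import Mathlib

set_option maxHeartbeats 1000000

open Real Finset intervalIntegral MeasureTheory


open Real Finset intervalIntegral MeasureTheory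

lemma integral_sin_mul (c : ℝ) (hc : c ≠ 0) :
    ∫ t in (0:ℝ)..π, Real.sin (c*t) = (1 - Real.cos (c*π))/c := by
  rw [intervalIntegral.integral_comp_mul_left Real.sin hc, mul_zero, integral_sin, smul_eq_mul]
  rw [Real.cos_zero]
  ring

lemma integral_cos_mul (c : ℝ) (hc : c ≠ 0) :
    ∫ t in (0:ℝ)..π, Real.cos (c*t) = Real.sin (c*π)/c := by
  rw [intervalIntegral.integral_comp_mul_left Real.cos hc, mul_zero, integral_cos, smul_eq_mul]
  rw [Real.sin_zero]
  ring

lemma eval_sin_int (j k : ℕ) :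
    ∫ t in (0:ℝ)..π, Real.sin ((2*(j:ℝ)+2*k+1)*t) = 1/((j:ℝ)+k+1/2) := by
  have hc : (2*(j:ℝ)+2*k+1) ≠ 0 := by positivity
  rw [integral_sin_mul _ hc]
  have : (2*(j:ℝ)+2*k+1)*π = (j+k : ℕ)*(2*π) + π := by push_cast; ring
  rw [this, Real.cos_nat_mul_two_pi_add_pi]
  push_cast
  field_simp
  ring

lemma eval_cos_int (j k : ℕ) :
    ∫ t in (0:ℝ)..π, Real.cos ((2*(j:ℝ)-2*k)*t) = if j = k then π else 0 := by
  rcases eq_or_ne j k with h | h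
  · subst h; simp
  · have hc : (2*(j:ℝ)-2*k) ≠ 0 := by
      intro hh
      apply h
      have : (j:ℝ) = k := by linarith
      exact_mod_cast this
    rw [integral_cos_mul _ hc, if_neg h]
    have : (2*(j:ℝ)-2*k)*π = ((((j:ℤ)-k)*2 : ℤ) : ℝ)*π := by push_cast; ring
    rw [this, Real.sin_int_mul_pi, zero_div]

lemma quad_bound {s co p q : ℝ} (h : s^2 + co^2 = 1) (hs : -1 ≤ s) :
    s*(p*p - q*q) + co*(p*q + q*p) ≤ p*p + q*q := by
  rcases eq_or_lt_of_le hs with he | hlt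
  · have hs1 : s = -1 := he.symm
    have hco : co = 0 := by nlinarith
    rw [hs1, hco]
    nlinarith [mul_self_nonneg p]
  · have hpos : 0 < 1 + s := by linarith
    have key : (1+s) * (p*p + q*q - (s*(p*p - q*q) + co*(p*q + q*p)))
        = (co*p - (1+s)*q)^2 + (1 - s^2 - co^2)*(p*p) := by ring
    have h2 : (1 - s^2 - co^2) = 0 := by linarith
    have h3 : 0 ≤ (1+s) * (p*p + q*q - (s*(p*p - q*q) + co*(p*q + q*p))) := by
      rw [key, h2]
      nlinarith [sq_nonneg (co*p - (1+s)*q)]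
    nlinarith

lemma hilbert_core (c : ℕ → ℝ) (N : ℕ) :
    ∑ j ∈ range N, ∑ k ∈ range N,
        (c j * c k * ∫ t in (0:ℝ)..π, Real.sin ((2*(j:ℝ)+2*k+1)*t))
      ≤ π * ∑ j ∈ range N, c j ^ 2 := by
  set P : ℝ → ℝ := fun t => ∑ j ∈ range N, c j * Real.cos (2*(j:ℝ)*t) with hP
  set S : ℝ → ℝ := fun t => ∑ j ∈ range N, c j * Real.sin (2*(j:ℝ)*t) with hS
  have contsin : ∀ a : ℝ, Continuous fun t : ℝ => Real.sin (a*t) :=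
    fun a => Real.continuous_sin.comp (continuous_const.mul continuous_id)
  have contcos : ∀ a : ℝ, Continuous fun t : ℝ => Real.cos (a*t) :=
    fun a => Real.continuous_cos.comp (continuous_const.mul continuous_id)
  have hPc : Continuous P := continuous_finset_sum _ fun j _ => continuous_const.mul (contcos _)
  have hSc : Continuous S := continuous_finset_sum _ fun j _ => continuous_const.mul (contsin _)
  have step1 : ∑ j ∈ range N, ∑ k ∈ range N,
      (c j * c k * ∫ t in (0:ℝ)..π, Real.sin ((2*(j:ℝ)+2*k+1)*t))
      = ∫ t in (0:ℝ)..π, ∑ j ∈ range N, ∑ k ∈ range N,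
          c j * c k * Real.sin ((2*(j:ℝ)+2*k+1)*t) := by
    rw [intervalIntegral.integral_finset_sum
      (f := fun j t => ∑ k ∈ range N, c j * c k * Real.sin ((2*(j:ℝ)+2*k+1)*t)) (fun j _ =>
      (continuous_finset_sum _ fun k _ =>
        continuous_const.mul (contsin _)).intervalIntegrable _ _)]
    refine Finset.sum_congr rfl fun j _ => ?_
    rw [intervalIntegral.integral_finset_sum
      (f := fun k t => c j * c k * Real.sin ((2*(j:ℝ)+2*k+1)*t)) (fun k _ =>
      (continuous_const.mul (contsin _)).intervalIntegrable _ _)]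
    exact Finset.sum_congr rfl fun k _ => (intervalIntegral.integral_const_mul _ _).symm
  have dist : ∀ (u : ℝ) (f g : ℕ → ℝ), u * ((∑ i ∈ range N, f i) * (∑ i ∈ range N, g i))
      = ∑ i ∈ range N, ∑ k ∈ range N, u * (f i * g k) := by
    intro u f g
    rw [Finset.sum_mul_sum, Finset.mul_sum]
    exact Finset.sum_congr rfl fun i _ => by rw [Finset.mul_sum]
  have expand : ∀ t : ℝ, ∑ j ∈ range N, ∑ k ∈ range N,
      c j * c k * Real.sin ((2*(j:ℝ)+2*k+1)*t)
      = Real.sin t * (P t * P t - S t * S t) + Real.cos t * (P t * S t + S t * P t) := by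
    intro t
    have hsplit : Real.sin t * (P t * P t - S t * S t) + Real.cos t * (P t * S t + S t * P t)
        = Real.sin t * (P t * P t) + (-Real.sin t) * (S t * S t)
          + (Real.cos t * (P t * S t) + Real.cos t * (S t * P t)) := by ring
    rw [hsplit]
    simp only [hP, hS]
    rw [dist, dist, dist, dist]
    simp only [← Finset.sum_add_distrib]
    refine Finset.sum_congr rfl fun j _ => Finset.sum_congr rfl fun k _ => ?_
    have h1 : (2*(j:ℝ)+2*k+1)*t = 2*(j:ℝ)*t + (2*(k:ℝ)*t + t) := by ring
    rw [h1, Real.sin_add, Real.sin_add, Real.cos_add]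
    ring
  have expand2 : ∀ t : ℝ, P t * P t + S t * S t
      = ∑ j ∈ range N, ∑ k ∈ range N, c j * c k * Real.cos ((2*(j:ℝ)-2*k)*t) := by
    intro t
    simp only [hP, hS, Finset.sum_mul_sum, ← Finset.sum_add_distrib]
    refine Finset.sum_congr rfl fun j _ => Finset.sum_congr rfl fun k _ => ?_
    have h1 : (2*(j:ℝ)-2*k)*t = 2*(j:ℝ)*t - 2*(k:ℝ)*t := by ring
    rw [h1, Real.cos_sub]
    ring
  have step2 : ∀ t ∈ Set.Icc (0:ℝ) π, ∑ j ∈ range N, ∑ k ∈ range N,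
      c j * c k * Real.sin ((2*(j:ℝ)+2*k+1)*t) ≤ P t * P t + S t * S t := by
    intro t _
    rw [expand t]
    exact quad_bound (Real.sin_sq_add_cos_sq t) (Real.neg_one_le_sin t)
  have step3 : ∫ t in (0:ℝ)..π, (P t * P t + S t * S t)
      = π * ∑ j ∈ range N, c j ^ 2 := by
    have : ∀ t : ℝ, P t * P t + S t * S t
        = ∑ j ∈ range N, ∑ k ∈ range N, c j * c k * Real.cos ((2*(j:ℝ)-2*k)*t) := expand2
    rw [intervalIntegral.integral_congr (fun t _ => this t)]
    rw [intervalIntegral.integral_finset_sum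
      (f := fun j t => ∑ k ∈ range N, c j * c k * Real.cos ((2*(j:ℝ)-2*k)*t)) (fun j _ =>
      (continuous_finset_sum _ fun k _ =>
        continuous_const.mul (contcos _)).intervalIntegrable _ _)]
    have : ∀ j ∈ range N, (∫ t in (0:ℝ)..π, ∑ k ∈ range N,
        c j * c k * Real.cos ((2*(j:ℝ)-2*k)*t)) = c j ^ 2 * π := by
      intro j hj
      rw [intervalIntegral.integral_finset_sum
        (f := fun k t => c j * c k * Real.cos ((2*(j:ℝ)-2*k)*t)) (fun k _ =>
        (continuous_const.mul (contcos _)).intervalIntegrable _ _)]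
      have : ∀ k ∈ range N, (∫ t in (0:ℝ)..π, c j * c k * Real.cos ((2*(j:ℝ)-2*k)*t))
          = if j = k then c j * c k * π else 0 := by
        intro k _
        rw [intervalIntegral.integral_const_mul, eval_cos_int]
        split <;> simp
      rw [Finset.sum_congr rfl this]
      simp only [Finset.sum_ite_eq, hj, if_pos]
      ring
    rw [Finset.sum_congr rfl this, ← Finset.sum_mul, mul_comm]
  calc ∑ j ∈ range N, ∑ k ∈ range N,
      (c j * c k * ∫ t in (0:ℝ)..π, Real.sin ((2*(j:ℝ)+2*k+1)*t))
      = ∫ t in (0:ℝ)..π, ∑ j ∈ range N, ∑ k ∈ range N,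
          c j * c k * Real.sin ((2*(j:ℝ)+2*k+1)*t) := step1
    _ ≤ ∫ t in (0:ℝ)..π, (P t * P t + S t * S t) := by
        refine intervalIntegral.integral_mono_on Real.pi_pos.le
          ((continuous_finset_sum _ fun j _ => continuous_finset_sum _ fun k _ =>
            continuous_const.mul (contsin _)).intervalIntegrable _ _)
          (((hPc.mul hPc).add (hSc.mul hSc)).intervalIntegrable _ _) step2
    _ = π * ∑ j ∈ range N, c j ^ 2 := step3

lemma fin_bound {θ : ℝ} (hθ : 1/2 ≤ θ) (a : ℕ → ℝ) (ha : ∀ i, 0 ≤ a i) (N : ℕ) :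
    ∑ j ∈ range N, ∑ k ∈ range N, a j * a k / ((j:ℝ) + k + θ)
      ≤ π * ∑ k ∈ range N, a k ^ 2 := by
  have step1 : ∑ j ∈ range N, ∑ k ∈ range N, a j * a k / ((j:ℝ) + k + θ)
      ≤ ∑ j ∈ range N, ∑ k ∈ range N, a j * a k / ((j:ℝ) + k + 1/2) := by
    refine Finset.sum_le_sum fun j _ => Finset.sum_le_sum fun k _ => ?_
    have h1 : (0:ℝ) < (j:ℝ) + k + 1/2 := by positivity
    have h2 : (j:ℝ) + k + 1/2 ≤ (j:ℝ) + k + θ := by linarith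
    have h3 : 0 ≤ a j * a k := mul_nonneg (ha j) (ha k)
    gcongr
  have step2 : ∑ j ∈ range N, ∑ k ∈ range N, a j * a k / ((j:ℝ) + k + 1/2)
      = ∑ j ∈ range N, ∑ k ∈ range N,
        (a j * a k * ∫ t in (0:ℝ)..π, Real.sin ((2*(j:ℝ)+2*k+1)*t)) := by
    refine Finset.sum_congr rfl fun j _ => Finset.sum_congr rfl fun k _ => ?_
    rw [eval_sin_int, ← div_eq_mul_one_div]
  calc ∑ j ∈ range N, ∑ k ∈ range N, a j * a k / ((j:ℝ) + k + θ)
      ≤ ∑ j ∈ range N, ∑ k ∈ range N, a j * a k / ((j:ℝ) + k + 1/2) := step1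
    _ = ∑ j ∈ range N, ∑ k ∈ range N,
        (a j * a k * ∫ t in (0:ℝ)..π, Real.sin ((2*(j:ℝ)+2*k+1)*t)) := step2
    _ ≤ π * ∑ k ∈ range N, a k ^ 2 := hilbert_core a N

lemma fin_nonneg {θ : ℝ} (hθ : 1/2 ≤ θ) (ξ : ℕ → ℝ) (N : ℕ) :
    0 ≤ ∑ j ∈ range N, ∑ k ∈ range N, ξ j * ξ k / ((j:ℝ) + k + θ) := by
  have hint : ∀ j k : ℕ, IntervalIntegrable (fun t : ℝ => t ^ ((j:ℝ)+k+θ-1))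
      volume 0 1 := by
    intro j k
    apply intervalIntegrable_rpow'
    have : (0:ℝ) ≤ (j:ℝ) + k := by positivity
    linarith
  have heval : ∀ j k : ℕ, ξ j * ξ k / ((j:ℝ) + k + θ)
      = ∫ t in (0:ℝ)..1, ξ j * ξ k * t ^ ((j:ℝ)+k+θ-1) := by
    intro j k
    rw [intervalIntegral.integral_const_mul, integral_rpow (Or.inl (by
      have : (0:ℝ) ≤ (j:ℝ) + k := by positivity
      linarith))]
    have h1 : (j:ℝ)+k+θ-1+1 = (j:ℝ)+k+θ := by ring
    have h2 : (0:ℝ) < (j:ℝ)+k+θ := by positivity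
    rw [h1, Real.one_rpow, Real.zero_rpow (ne_of_gt h2)]
    ring
  have hsum_int : ∀ j : ℕ, IntervalIntegrable
      (fun t : ℝ => ∑ k ∈ range N, ξ j * ξ k * t ^ ((j:ℝ)+k+θ-1)) volume 0 1 := by
    intro j
    have h := IntervalIntegrable.sum (μ := volume) (a := (0:ℝ)) (b := (1:ℝ)) (range N)
      (f := fun k (t:ℝ) => ξ j * ξ k * t ^ ((j:ℝ)+k+θ-1))
      (fun k _ => (hint j k).const_mul (ξ j * ξ k))
    have heq : (∑ k ∈ range N, fun t : ℝ => ξ j * ξ k * t ^ ((j:ℝ)+k+θ-1))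
        = fun t : ℝ => ∑ k ∈ range N, ξ j * ξ k * t ^ ((j:ℝ)+k+θ-1) := by
      funext t
      simp [Finset.sum_apply]
    rwa [heq] at h
  have hrw : ∑ j ∈ range N, ∑ k ∈ range N, ξ j * ξ k / ((j:ℝ) + k + θ)
      = ∫ t in (0:ℝ)..1, ∑ j ∈ range N, ∑ k ∈ range N, ξ j * ξ k * t ^ ((j:ℝ)+k+θ-1) := by
    calc ∑ j ∈ range N, ∑ k ∈ range N, ξ j * ξ k / ((j:ℝ) + k + θ)
        = ∑ j ∈ range N, ∫ t in (0:ℝ)..1, ∑ k ∈ range N, ξ j * ξ k * t ^ ((j:ℝ)+k+θ-1) := by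
          refine Finset.sum_congr rfl fun j _ => ?_
          rw [intervalIntegral.integral_finset_sum (fun k _ => (hint j k).const_mul _)]
          exact Finset.sum_congr rfl fun k _ => heval j k
      _ = ∫ t in (0:ℝ)..1, ∑ j ∈ range N, ∑ k ∈ range N, ξ j * ξ k * t ^ ((j:ℝ)+k+θ-1) :=
          (intervalIntegral.integral_finset_sum
            (f := fun j t => ∑ k ∈ range N, ξ j * ξ k * t ^ ((j:ℝ)+k+θ-1))
            (fun j _ => hsum_int j)).symm
  rw [hrw]
  apply intervalIntegral.integral_nonneg_of_ae_restrict zero_le_one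
  have h0 : ∀ᵐ (t:ℝ), t ≠ (0:ℝ) := by
    rw [MeasureTheory.ae_iff]
    have hset : {t : ℝ | ¬ t ≠ 0} = {(0:ℝ)} := by ext t; simp
    rw [hset]
    exact MeasureTheory.measure_singleton 0
  filter_upwards [MeasureTheory.ae_restrict_of_ae h0,
    MeasureTheory.ae_restrict_mem measurableSet_Icc] with t ht0 htm
  have htpos : 0 < t := lt_of_le_of_ne htm.1 (Ne.symm ht0)
  have key : ∑ j ∈ range N, ∑ k ∈ range N, ξ j * ξ k * t ^ ((j:ℝ)+k+θ-1)
      = t ^ (θ-1) * ((∑ j ∈ range N, ξ j * t^j) * (∑ k ∈ range N, ξ k * t^k)) := by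
    rw [Finset.sum_mul_sum, Finset.mul_sum]
    refine Finset.sum_congr rfl fun j _ => ?_
    rw [Finset.mul_sum]
    refine Finset.sum_congr rfl fun k _ => ?_
    have hexp : t ^ ((j:ℝ)+k+θ-1) = t^(θ-1) * t^(j:ℕ) * t^(k:ℕ) := by
      rw [← Real.rpow_natCast t j, ← Real.rpow_natCast t k,
        ← Real.rpow_add htpos, ← Real.rpow_add htpos]
      ring_nf
    rw [hexp]
    ring
  rw [key]
  exact mul_nonneg (Real.rpow_nonneg htpos.le _) (mul_self_nonneg _)

lemma part1 {θ : ℝ} (hθ : 1/2 ≤ θ) (ξ : ℕ → ℝ) (hsum : Summable (fun k => ξ k ^ 2)) :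
    Summable (fun p : ℕ × ℕ => ξ p.1 * ξ p.2 / ((p.1 : ℝ) + p.2 + θ)) ∧
    0 ≤ (∑' p : ℕ × ℕ, ξ p.1 * ξ p.2 / ((p.1 : ℝ) + p.2 + θ)) ∧
    (∑' p : ℕ × ℕ, ξ p.1 * ξ p.2 / ((p.1 : ℝ) + p.2 + θ)) ≤ π * ∑' k : ℕ, ξ k ^ 2 := by
  set f : ℕ × ℕ → ℝ := fun p => ξ p.1 * ξ p.2 / ((p.1 : ℝ) + p.2 + θ) with hf
  set g : ℕ × ℕ → ℝ := fun p => |ξ p.1| * |ξ p.2| / ((p.1 : ℝ) + p.2 + θ) with hg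
  have hden : ∀ p : ℕ × ℕ, 0 < (p.1 : ℝ) + p.2 + θ := by
    intro p
    have h1 : (0:ℝ) ≤ (p.1 : ℝ) + p.2 := by positivity
    linarith
  have hg_nonneg : 0 ≤ g := by
    intro p
    exact div_nonneg (mul_nonneg (abs_nonneg _) (abs_nonneg _)) (hden p).le
  have habs : ∀ p, |f p| = g p := by
    intro p
    rw [hf, hg, abs_div, abs_mul, abs_of_pos (hden p)]
  have hsq : ∀ k, |ξ k| ^ 2 = ξ k ^ 2 := fun k => sq_abs _
  have hbound : ∀ s : Finset (ℕ × ℕ), ∑ p ∈ s, g p ≤ π * ∑' k : ℕ, ξ k ^ 2 := by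
    intro s
    set N : ℕ := 1 + s.sup (fun p => max p.1 p.2) with hN
    have hsub : s ⊆ Finset.range N ×ˢ Finset.range N := by
      intro p hp
      rw [Finset.mem_product, Finset.mem_range, Finset.mem_range]
      have h1 : max p.1 p.2 ≤ s.sup (fun p => max p.1 p.2) := Finset.le_sup (f := fun p : ℕ × ℕ => max p.1 p.2) hp
      omega
    calc ∑ p ∈ s, g p ≤ ∑ p ∈ Finset.range N ×ˢ Finset.range N, g p :=
          Finset.sum_le_sum_of_subset_of_nonneg hsub (fun p _ _ => hg_nonneg p)
      _ = ∑ j ∈ range N, ∑ k ∈ range N, |ξ j| * |ξ k| / ((j:ℝ) + k + θ) := by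
          rw [Finset.sum_product]
      _ ≤ π * ∑ k ∈ range N, |ξ k| ^ 2 :=
          fin_bound hθ (fun k => |ξ k|) (fun k => abs_nonneg _) N
      _ ≤ π * ∑' k : ℕ, ξ k ^ 2 := by
          apply mul_le_mul_of_nonneg_left _ Real.pi_pos.le
          simp only [hsq]
          exact Summable.sum_le_tsum _ (fun k _ => sq_nonneg _) hsum
  have hgsum : Summable g := summable_of_sum_le hg_nonneg hbound
  have hfsum : Summable f := by
    rw [← summable_abs_iff]
    simpa only [habs] using hgsum
  refine ⟨hfsum, ?_, ?_⟩
  · have hmono : Monotone (fun N : ℕ => Finset.range N ×ˢ Finset.range N) := by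
      intro m n hmn
      exact Finset.product_subset_product (Finset.range_subset_range.2 hmn) (Finset.range_subset_range.2 hmn)
    have hcov : ∀ p : ℕ × ℕ, ∃ N : ℕ, p ∈ Finset.range N ×ˢ Finset.range N := by
      intro p
      exact ⟨1 + max p.1 p.2, by rw [Finset.mem_product, Finset.mem_range, Finset.mem_range]; omega⟩
    have htop := Filter.tendsto_atTop_finset_of_monotone hmono hcov
    have htend : Filter.Tendsto (fun N : ℕ => ∑ p ∈ Finset.range N ×ˢ Finset.range N, f p)
        Filter.atTop (nhds (∑' p, f p)) := hfsum.hasSum.comp htop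
    refine ge_of_tendsto' htend (fun N => ?_)
    rw [Finset.sum_product]
    exact fin_nonneg hθ ξ N
  · calc (∑' p, f p) ≤ ∑' p, g p := by
          refine Summable.tsum_le_tsum (fun p => ?_) hfsum hgsum
          rw [← habs p]
          exact le_abs_self _
      _ ≤ π * ∑' k : ℕ, ξ k ^ 2 := Summable.tsum_le_of_sum_le hgsum hbound


lemma my_arctan_le_self {x : ℝ} (hx : 0 ≤ x) : Real.arctan x ≤ x := by
  rcases eq_or_lt_of_le hx with h | h
  · rw [← h, Real.arctan_zero]
  · have h1 : 0 < Real.arctan x := by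
      have := Real.arctan_strictMono h
      rwa [Real.arctan_zero] at this
    have h2 := Real.lt_tan h1 (Real.arctan_lt_pi_div_two x)
    rw [Real.tan_arctan] at h2
    exact h2.le

lemma my_arctan_lower {y : ℝ} (hy : 0 < y) : π/2 - 1/y ≤ Real.arctan y := by
  have h1 := Real.arctan_inv_of_pos hy
  have h2 : Real.arctan y⁻¹ ≤ y⁻¹ := my_arctan_le_self (by positivity)
  rw [one_div]
  linarith

lemma my_integral_sqrt_eval {β : ℝ} (hβ : 0 < β) (N : ℕ) :
    ∫ x in (0:ℝ)..(N:ℝ), 1/(Real.sqrt (x+1) * (x+1+β))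
      = 2/Real.sqrt β * (Real.arctan (Real.sqrt ((N:ℝ)+1)/Real.sqrt β)
          - Real.arctan (1/Real.sqrt β)) := by
  have hsβ : 0 < Real.sqrt β := Real.sqrt_pos.2 hβ
  have hderiv : ∀ x ∈ Set.uIcc (0:ℝ) (N:ℝ),
      HasDerivAt (fun y : ℝ => 2/Real.sqrt β * Real.arctan (Real.sqrt (y+1)/Real.sqrt β))
        (1/(Real.sqrt (x+1) * (x+1+β))) x := by
    intro x hx
    have hx0 : 0 ≤ x := by
      rcases Set.mem_uIcc.1 hx with h | h
      · exact h.1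
      · exact le_trans (Nat.cast_nonneg N) h.1
    have hx1 : (0:ℝ) < x + 1 := by linarith
    have hs1 : 0 < Real.sqrt (x+1) := Real.sqrt_pos.2 hx1
    have h1 : HasDerivAt (fun y : ℝ => y + 1) 1 x := (hasDerivAt_id x).add_const 1
    have h2 : HasDerivAt (fun y : ℝ => Real.sqrt (y+1)) (1/(2*Real.sqrt (x+1))) x := by
      have := (Real.hasDerivAt_sqrt (ne_of_gt hx1)).comp x h1
      simpa [Function.comp_def] using this
    have h3 : HasDerivAt (fun y : ℝ => Real.sqrt (y+1)/Real.sqrt β)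
        ((1/(2*Real.sqrt (x+1)))/Real.sqrt β) x := h2.div_const _
    have h4 : HasDerivAt (fun y : ℝ => Real.arctan (Real.sqrt (y+1)/Real.sqrt β))
        ((1/(1+(Real.sqrt (x+1)/Real.sqrt β)^2)) * ((1/(2*Real.sqrt (x+1)))/Real.sqrt β)) x := by
      have := (Real.hasDerivAt_arctan (Real.sqrt (x+1)/Real.sqrt β)).comp x h3
      simpa [Function.comp_def] using this
    have h5 := h4.const_mul (2/Real.sqrt β)
    refine h5.congr_deriv ?_
    symm
    have hβ2 : Real.sqrt β ^ 2 = β := Real.sq_sqrt hβ.le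
    have hx2 : Real.sqrt (x+1) ^ 2 = x + 1 := Real.sq_sqrt hx1.le
    have hne1 : Real.sqrt (x+1) ≠ 0 := ne_of_gt hs1
    have hne2 : Real.sqrt β ≠ 0 := ne_of_gt hsβ
    have hne3 : x + 1 + β ≠ 0 := by positivity
    have hmm : Real.sqrt (x+1) * Real.sqrt (x+1) = x+1 := Real.mul_self_sqrt hx1.le
    have hbb : Real.sqrt β * Real.sqrt β = β := Real.mul_self_sqrt hβ.le
    field_simp
    linear_combination hβ2 + hx2
  have hcont : ContinuousOn (fun x : ℝ => 1/(Real.sqrt (x+1) * (x+1+β)))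
      (Set.uIcc (0:ℝ) (N:ℝ)) := by
    apply ContinuousOn.div continuousOn_const
    · exact ((Real.continuous_sqrt.comp (continuous_id.add continuous_const)).continuousOn).mul
        (by fun_prop)
    · intro x hx
      have hx0 : 0 ≤ x := by
        rcases Set.mem_uIcc.1 hx with h | h
        · exact h.1
        · exact le_trans (Nat.cast_nonneg N) h.1
      have hx1 : (0:ℝ) < x + 1 := by linarith
      have := Real.sqrt_pos.2 hx1
      positivity
  rw [intervalIntegral.integral_eq_sub_of_hasDerivAt hderiv (hcont.intervalIntegrable)]
  rw [zero_add, Real.sqrt_one]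
  ring

lemma my_integral_log_eval {c : ℝ} (hc : 0 < c) {a b : ℝ} (ha : 0 ≤ a) (hab : a ≤ b) :
    ∫ x in a..b, 1/(x+c) = Real.log (b+c) - Real.log (a+c) := by
  have hderiv : ∀ x ∈ Set.uIcc a b, HasDerivAt (fun y : ℝ => Real.log (y+c)) (1/(x+c)) x := by
    intro x hx
    have hx0 : a ≤ x := by
      rcases Set.mem_uIcc.1 hx with h | h
      · exact h.1
      · exact le_trans hab h.1
    have hx1 : (0:ℝ) < x + c := by linarith
    have h1 : HasDerivAt (fun y : ℝ => y + c) 1 x := (hasDerivAt_id x).add_const c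
    have := (Real.hasDerivAt_log (ne_of_gt hx1)).comp x h1
    simpa [one_div, Function.comp_def] using this
  have hcont : ContinuousOn (fun x : ℝ => 1/(x+c)) (Set.uIcc a b) := by
    apply ContinuousOn.div continuousOn_const (by fun_prop)
    intro x hx
    have hx0 : a ≤ x := by
      rcases Set.mem_uIcc.1 hx with h | h
      · exact h.1
      · exact le_trans hab h.1
    have : (0:ℝ) < x + c := by linarith
    exact ne_of_gt this
  rw [intervalIntegral.integral_eq_sub_of_hasDerivAt hderiv (hcont.intervalIntegrable)]

lemma antitone_inv_shift {c : ℝ} (hc : 0 < c) {s : Set ℝ} (hs : ∀ x ∈ s, 0 ≤ x) :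
    AntitoneOn (fun x : ℝ => 1/(x+c)) s := by
  intro x hx y hy hxy
  have hx0 : 0 < x + c := by have := hs x hx; linarith
  have hy0 : 0 < y + c := by have := hs y hy; linarith
  apply one_div_le_one_div_of_le hx0
  linarith

lemma harmonic_le (N : ℕ) (hN : 1 ≤ N) :
    ∑ k ∈ range N, 1/((k:ℝ)+1) ≤ 1 + Real.log N := by
  obtain ⟨m, rfl⟩ : ∃ m, N = m + 1 := ⟨N - 1, by omega⟩
  rw [Finset.sum_range_succ']
  have hanti : AntitoneOn (fun x : ℝ => 1/(x+1)) (Set.Icc (0:ℝ) (0 + (m:ℝ))) :=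
    antitone_inv_shift one_pos (fun x hx => hx.1)
  have hint := hanti.sum_le_integral
  rw [zero_add] at hint
  have heval : ∫ x in (0:ℝ)..(m:ℝ), 1/(x+1) = Real.log ((m:ℝ)+1) := by
    rw [my_integral_log_eval one_pos le_rfl (Nat.cast_nonneg m), zero_add, Real.log_one]
    ring
  have hsum : ∑ i ∈ range m, 1/((i:ℝ)+1+1) ≤ Real.log ((m:ℝ)+1) := by
    rw [← heval]
    refine le_trans (le_of_eq ?_) hint
    refine Finset.sum_congr rfl fun i _ => ?_
    push_cast
    ring_nf
  calc (∑ i ∈ range m, 1/(((i+1:ℕ):ℝ)+1)) + 1/(((0:ℕ):ℝ)+1)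
      = (∑ i ∈ range m, 1/((i:ℝ)+1+1)) + 1 := by
        have h1 : (∑ i ∈ range m, 1/(((i+1:ℕ):ℝ)+1)) = ∑ i ∈ range m, 1/((i:ℝ)+1+1) := by
          refine Finset.sum_congr rfl fun i _ => ?_
          push_cast
          ring_nf
        rw [h1]
        norm_num
    _ ≤ Real.log ((m:ℝ)+1) + 1 := by linarith [hsum]
    _ = 1 + Real.log (((m+1:ℕ)):ℝ) := by push_cast; ring

lemma part2_est {θ : ℝ} (hθ : 1/2 ≤ θ) {ε : ℝ} (hε : 0 < ε) (hεπ : ε ≤ π) :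
    ∃ N : ℕ, 0 < N ∧
      (π - ε) * (∑ k ∈ range N, 1/((k:ℝ)+1))
        < ∑ j ∈ range N, ∑ k ∈ range N,
            (1/Real.sqrt ((j:ℝ)+1)) * (1/Real.sqrt ((k:ℝ)+1)) / ((j:ℝ)+(k:ℝ)+θ) := by
  have hπ := Real.pi_pos
  set c : ℝ := max θ 1 with hc
  have hc1 : 1 ≤ c := le_max_right _ _
  have hcθ : θ ≤ c := le_max_left _ _
  have hc0 : 0 < c := by linarith
  set K : ℕ := ⌈(64:ℝ)/ε^2⌉₊ + 1 with hK
  have hK64 : (64:ℝ)/ε^2 + 1 ≤ (K:ℝ) := by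
    have h1 := Nat.le_ceil ((64:ℝ)/ε^2)
    rw [hK]; push_cast; linarith
  have hK1 : 1 ≤ K := by rw [hK]; omega
  have hK1' : (1:ℝ) ≤ K := by exact_mod_cast hK1
  set T : ℕ := ⌈(32:ℝ)/ε^2⌉₊ + 1 with hT
  have hT32 : (32:ℝ)/ε^2 ≤ (T:ℝ) := by
    refine le_trans (Nat.le_ceil _) ?_
    rw [hT]; push_cast; linarith
  have hT1 : 1 ≤ T := by rw [hT]; omega
  have hT1' : (1:ℝ) ≤ T := by exact_mod_cast hT1
  have hT0' : (0:ℝ) < T := by linarith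
  set B : ℝ := π * (Real.log ((K:ℝ)+c) + 1 + Real.log (T:ℝ)) with hB
  set M : ℕ := ⌈Real.exp (4*B/ε + 1)⌉₊ + K + ⌈θ⌉₊ + 1 with hM
  have hMK : K < M := by rw [hM]; omega
  have hM1 : 1 ≤ M := by omega
  have hM0' : (0:ℝ) < M := by exact_mod_cast Nat.pos_of_ne_zero (by omega)
  have hMθ : θ ≤ (M:ℝ) := by
    refine le_trans (Nat.le_ceil θ) ?_
    have : ⌈θ⌉₊ ≤ M := by rw [hM]; omega
    exact_mod_cast this
  have hlogM : 4*B/ε + 1 ≤ Real.log (M:ℝ) := by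
    have h1 : Real.exp (4*B/ε+1) ≤ (M:ℝ) := by
      refine le_trans (Nat.le_ceil _) ?_
      have : ⌈Real.exp (4*B/ε + 1)⌉₊ ≤ M := by rw [hM]; omega
      exact_mod_cast this
    exact (Real.le_log_iff_exp_le hM0').2 h1
  set N : ℕ := T * M with hN
  have hMN : M ≤ N := by rw [hN]; exact Nat.le_mul_of_pos_left M (by omega)
  have hN1 : 1 ≤ N := le_trans hM1 hMN
  refine ⟨N, by omega, ?_⟩
  set A : ℝ := π/2 - ε/4 - ε/8 with hA
  have hApos : 0 < A := by rw [hA]; linarith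
  -- the key per-k estimate
  have key1 : ∀ k ∈ Finset.Ico K M, 2*A/((k:ℝ)+c)
      ≤ ∑ j ∈ range N, (1/Real.sqrt ((j:ℝ)+1)) * (1/Real.sqrt ((k:ℝ)+1)) / ((j:ℝ)+(k:ℝ)+θ) := by
    intro k hk
    obtain ⟨hkK, hkM⟩ := Finset.mem_Ico.1 hk
    have hkK' : (K:ℝ) ≤ k := by exact_mod_cast hkK
    have hkM' : (k:ℝ) ≤ M := by exact_mod_cast hkM.le
    set β : ℝ := (k:ℝ) + θ - 1 with hβ
    have hβpos : 0 < β := by rw [hβ]; linarith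
    have hβ64 : 64/ε^2 ≤ β := by rw [hβ]; linarith
    have hsβ : 0 < Real.sqrt β := Real.sqrt_pos.2 hβpos
    have hsk1 : 0 < Real.sqrt ((k:ℝ)+1) := Real.sqrt_pos.2 (by positivity)
    -- integral comparison
    have hanti : AntitoneOn (fun x : ℝ => 1/(Real.sqrt (x+1) * (x+1+β)))
        (Set.Icc (0:ℝ) (0+(N:ℝ))) := by
      intro x hx y hy hxy
      have hx1 : (0:ℝ) < x + 1 := by have := hx.1; linarith
      have hy1 : (0:ℝ) < y + 1 := by have := hy.1; linarith
      have hsx : 0 < Real.sqrt (x+1) := Real.sqrt_pos.2 hx1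
      have hsy : 0 < Real.sqrt (y+1) := Real.sqrt_pos.2 hy1
      apply one_div_le_one_div_of_le (by positivity)
      apply mul_le_mul (Real.sqrt_le_sqrt (by linarith)) (by linarith) (by positivity)
        (Real.sqrt_nonneg _)
    have hint := hanti.integral_le_sum
    simp only [zero_add] at hint
    have heval := my_integral_sqrt_eval hβpos N
    rw [heval] at hint
    -- arctan bounds
    have harct1 : Real.arctan (1/Real.sqrt β) ≤ ε/8 := by
      have h1 : Real.arctan (1/Real.sqrt β) ≤ 1/Real.sqrt β := my_arctan_le_self (by positivity)
      have h2 : (8:ℝ)/ε ≤ Real.sqrt β := by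
        rw [show (8:ℝ)/ε = Real.sqrt ((8/ε)^2) from (Real.sqrt_sq (by positivity)).symm]
        apply Real.sqrt_le_sqrt
        have h3 : (8/ε)^2 = 64/ε^2 := by ring
        linarith
      have h4 : 1/Real.sqrt β ≤ ε/8 := by
        rw [div_le_div_iff₀ hsβ (by norm_num : (0:ℝ) < 8)]
        have h5 : ε * (8/ε) ≤ ε * Real.sqrt β := mul_le_mul_of_nonneg_left h2 hε.le
        have h6 : ε * (8/ε) = 8 := by field_simp
        linarith
      linarith
    have harct2 : π/2 - ε/4 ≤ Real.arctan (Real.sqrt ((N:ℝ)+1)/Real.sqrt β) := by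
      have hsN : 0 < Real.sqrt ((N:ℝ)+1) := Real.sqrt_pos.2 (by positivity)
      have hy : 0 < Real.sqrt ((N:ℝ)+1)/Real.sqrt β := by positivity
      have hlow := my_arctan_lower hy
      have h1 : 1/(Real.sqrt ((N:ℝ)+1)/Real.sqrt β) = Real.sqrt β/Real.sqrt ((N:ℝ)+1) :=
        one_div_div _ _
      rw [h1] at hlow
      have hβ2M : β ≤ 2*(M:ℝ) := by rw [hβ]; linarith
      have hNTM : (T:ℝ)*(M:ℝ) ≤ (N:ℝ)+1 := by
        have : ((T*M : ℕ):ℝ) = (T:ℝ)*(M:ℝ) := by push_cast; ring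
        rw [hN]; rw [this]; linarith
      have h2 : Real.sqrt β ≤ Real.sqrt (2*(M:ℝ)) := Real.sqrt_le_sqrt hβ2M
      have h3 : Real.sqrt ((T:ℝ)*(M:ℝ)) ≤ Real.sqrt ((N:ℝ)+1) := Real.sqrt_le_sqrt hNTM
      have hsTM : 0 < Real.sqrt ((T:ℝ)*(M:ℝ)) := Real.sqrt_pos.2 (by positivity)
      have h4 : Real.sqrt β/Real.sqrt ((N:ℝ)+1) ≤ Real.sqrt (2*(M:ℝ))/Real.sqrt ((T:ℝ)*(M:ℝ)) :=
        div_le_div₀ (Real.sqrt_nonneg _) h2 hsTM h3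
      have h5 : Real.sqrt (2*(M:ℝ))/Real.sqrt ((T:ℝ)*(M:ℝ)) = Real.sqrt 2/Real.sqrt (T:ℝ) := by
        rw [Real.sqrt_mul (by norm_num : (0:ℝ) ≤ 2), Real.sqrt_mul hT0'.le]
        exact mul_div_mul_right _ _ (ne_of_gt (Real.sqrt_pos.2 hM0'))
      have h6 : Real.sqrt 2/Real.sqrt (T:ℝ) ≤ ε/4 := by
        have hsT : 0 < Real.sqrt (T:ℝ) := Real.sqrt_pos.2 hT0'
        rw [div_le_div_iff₀ hsT (by norm_num : (0:ℝ) < 4)]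
        have h7 : Real.sqrt 2 * 4 = Real.sqrt 32 := by
          rw [show (32:ℝ) = 2 * 4^2 by norm_num, Real.sqrt_mul (by norm_num),
            Real.sqrt_sq (by norm_num)]
        have h8 : ε * Real.sqrt (T:ℝ) = Real.sqrt (ε^2 * T) := by
          rw [Real.sqrt_mul (sq_nonneg ε), Real.sqrt_sq hε.le]
        rw [h7, h8]
        apply Real.sqrt_le_sqrt
        have h9 := mul_le_mul_of_nonneg_left hT32 (sq_nonneg ε)
        have h10 : ε^2 * (32/ε^2) = 32 := by field_simp
        linarith
      linarith
    -- rewrite the sum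
    have hterm : ∀ j : ℕ, (1/Real.sqrt ((j:ℝ)+1)) * (1/Real.sqrt ((k:ℝ)+1)) / ((j:ℝ)+(k:ℝ)+θ)
        = (1/Real.sqrt ((k:ℝ)+1)) * (1/(Real.sqrt ((j:ℝ)+1) * ((j:ℝ)+1+β))) := by
      intro j
      have hd : (j:ℝ)+1+β = (j:ℝ)+(k:ℝ)+θ := by rw [hβ]; ring
      rw [hd, one_div, one_div, one_div, mul_inv, div_eq_mul_inv]
      ring
    have hsumrw : ∑ j ∈ range N, (1/Real.sqrt ((j:ℝ)+1)) * (1/Real.sqrt ((k:ℝ)+1)) / ((j:ℝ)+(k:ℝ)+θ)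
        = (1/Real.sqrt ((k:ℝ)+1)) * ∑ j ∈ range N, 1/(Real.sqrt ((j:ℝ)+1) * ((j:ℝ)+1+β)) := by
      rw [Finset.mul_sum]
      exact Finset.sum_congr rfl fun j _ => hterm j
    rw [hsumrw]
    -- combine
    have hdiff : A ≤ Real.arctan (Real.sqrt ((N:ℝ)+1)/Real.sqrt β)
        - Real.arctan (1/Real.sqrt β) := by rw [hA]; linarith
    have hstep1 : 2/Real.sqrt β * A ≤ ∑ j ∈ range N, 1/(Real.sqrt ((j:ℝ)+1) * ((j:ℝ)+1+β)) := by
      refine le_trans ?_ hint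
      apply mul_le_mul_of_nonneg_left hdiff (by positivity)
    have hprod : Real.sqrt ((k:ℝ)+1) * Real.sqrt β ≤ (k:ℝ)+c := by
      rw [← Real.sqrt_mul (by positivity : (0:ℝ) ≤ (k:ℝ)+1)]
      rw [show (k:ℝ)+c = Real.sqrt (((k:ℝ)+c)^2) from (Real.sqrt_sq (by positivity)).symm]
      apply Real.sqrt_le_sqrt
      have hb1 : β ≤ (k:ℝ)+c := by rw [hβ]; linarith
      have hb2 : (k:ℝ)+1 ≤ (k:ℝ)+c := by linarith
      nlinarith [hβpos, (Nat.cast_nonneg k : (0:ℝ) ≤ (k:ℝ))]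
    have h0 : 0 < Real.sqrt ((k:ℝ)+1) * Real.sqrt β := by positivity
    calc 2*A/((k:ℝ)+c) ≤ 2*A/(Real.sqrt ((k:ℝ)+1) * Real.sqrt β) := by
          rw [div_le_div_iff₀ (by positivity) h0]
          exact mul_le_mul_of_nonneg_left hprod (by linarith)
      _ = (1/Real.sqrt ((k:ℝ)+1)) * (2/Real.sqrt β * A) := by
          field_simp
      _ ≤ (1/Real.sqrt ((k:ℝ)+1)) * ∑ j ∈ range N, 1/(Real.sqrt ((j:ℝ)+1) * ((j:ℝ)+1+β)) := by
          apply mul_le_mul_of_nonneg_left hstep1 (by positivity)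
  have key2 : ∑ k ∈ Finset.Ico K M, 2*A/((k:ℝ)+c)
      ≤ ∑ j ∈ range N, ∑ k ∈ range N,
          (1/Real.sqrt ((j:ℝ)+1)) * (1/Real.sqrt ((k:ℝ)+1)) / ((j:ℝ)+(k:ℝ)+θ) := by
    calc ∑ k ∈ Finset.Ico K M, 2*A/((k:ℝ)+c)
        ≤ ∑ k ∈ Finset.Ico K M, ∑ j ∈ range N,
            (1/Real.sqrt ((j:ℝ)+1)) * (1/Real.sqrt ((k:ℝ)+1)) / ((j:ℝ)+(k:ℝ)+θ) :=
          Finset.sum_le_sum key1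
      _ ≤ ∑ k ∈ range N, ∑ j ∈ range N,
            (1/Real.sqrt ((j:ℝ)+1)) * (1/Real.sqrt ((k:ℝ)+1)) / ((j:ℝ)+(k:ℝ)+θ) := by
          apply Finset.sum_le_sum_of_subset_of_nonneg
          · intro x hx
            rw [Finset.mem_range]
            have := (Finset.mem_Ico.1 hx).2
            omega
          · intro k _ _
            apply Finset.sum_nonneg
            intro j _
            have hd : (0:ℝ) < (j:ℝ)+(k:ℝ)+θ := by positivity
            positivity
      _ = ∑ j ∈ range N, ∑ k ∈ range N,
            (1/Real.sqrt ((j:ℝ)+1)) * (1/Real.sqrt ((k:ℝ)+1)) / ((j:ℝ)+(k:ℝ)+θ) :=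
          Finset.sum_comm
  have key3 : 2*A*(Real.log ((M:ℝ)+c) - Real.log ((K:ℝ)+c))
      ≤ ∑ k ∈ Finset.Ico K M, 2*A/((k:ℝ)+c) := by
    have hanti2 : AntitoneOn (fun x : ℝ => 1/(x+c)) (Set.Icc ((K:ℝ)) ((K:ℝ)+((M-K:ℕ):ℝ))) :=
      antitone_inv_shift hc0 (fun x hx => le_trans (Nat.cast_nonneg K) hx.1)
    have hint2 := hanti2.integral_le_sum
    have hcast : (K:ℝ)+((M-K:ℕ):ℝ) = (M:ℝ) := by
      rw [Nat.cast_sub hMK.le]; ring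
    rw [hcast, my_integral_log_eval hc0 (Nat.cast_nonneg K)
      (by exact_mod_cast hMK.le : (K:ℝ) ≤ (M:ℝ))] at hint2
    have hsum : ∑ i ∈ range (M-K), 1/(((K:ℝ)+(i:ℝ))+c)
        = ∑ k ∈ Finset.Ico K M, 1/((k:ℝ)+c) := by
      rw [Finset.sum_Ico_eq_sum_range]
      refine Finset.sum_congr rfl fun i _ => ?_
      push_cast; ring_nf
    calc 2*A*(Real.log ((M:ℝ)+c) - Real.log ((K:ℝ)+c))
        ≤ 2*A*∑ k ∈ Finset.Ico K M, 1/((k:ℝ)+c) := by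
          apply mul_le_mul_of_nonneg_left _ (by linarith)
          rw [← hsum]
          exact hint2
      _ = ∑ k ∈ Finset.Ico K M, 2*A/((k:ℝ)+c) := by
          rw [Finset.mul_sum]
          exact Finset.sum_congr rfl fun k _ => by rw [mul_one_div]
  have hSN : ∑ k ∈ range N, 1/((k:ℝ)+1) ≤ 1 + Real.log N := harmonic_le N hN1
  have hlogN : Real.log (N:ℝ) = Real.log (T:ℝ) + Real.log (M:ℝ) := by
    rw [hN, Nat.cast_mul]
    exact Real.log_mul (ne_of_gt hT0') (ne_of_gt hM0')
  have hlogMc : Real.log (M:ℝ) ≤ Real.log ((M:ℝ)+c) := Real.log_le_log hM0' (by linarith)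
  have hlogK0 : 0 ≤ Real.log ((K:ℝ)+c) := Real.log_nonneg (by linarith)
  have hlogT0 : 0 ≤ Real.log (T:ℝ) := Real.log_nonneg hT1'
  have hnum : (π - ε) * (1 + Real.log (N:ℝ)) < 2*A*(Real.log ((M:ℝ)+c) - Real.log ((K:ℝ)+c)) := by
    have f1 : (ε/4) * (4*B/ε + 1) ≤ (ε/4) * Real.log (M:ℝ) :=
      mul_le_mul_of_nonneg_left hlogM (by linarith)
    have f1' : (ε/4) * (4*B/ε+1) = B + ε/4 := by field_simp
    have f1'' : B + ε/4 ≤ (ε/4) * Real.log (M:ℝ) := by rw [← f1']; exact f1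
    have f2 : (π-3*ε/4)*(Real.log (M:ℝ) - Real.log ((K:ℝ)+c))
        ≤ (π-3*ε/4)*(Real.log ((M:ℝ)+c) - Real.log ((K:ℝ)+c)) := by
      apply mul_le_mul_of_nonneg_left (by linarith) (by linarith)
    have f4 : 0 ≤ (3*ε/4) * Real.log ((K:ℝ)+c) :=
      mul_nonneg (by linarith) hlogK0
    have f5 : 0 ≤ ε * (1+Real.log (T:ℝ)) :=
      mul_nonneg hε.le (by linarith)
    have hBdef : B = π * (Real.log ((K:ℝ)+c) + 1 + Real.log (T:ℝ)) := hB
    have h2A : 2*A = π - 3*ε/4 := by rw [hA]; ring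
    rw [hlogN, h2A]
    nlinarith [f1'', f2, f4, f5, hBdef]
  calc (π - ε) * (∑ k ∈ range N, 1/((k:ℝ)+1))
      ≤ (π - ε) * (1 + Real.log (N:ℝ)) := mul_le_mul_of_nonneg_left hSN (by linarith)
    _ < 2*A*(Real.log ((M:ℝ)+c) - Real.log ((K:ℝ)+c)) := hnum
    _ ≤ ∑ k ∈ Finset.Ico K M, 2*A/((k:ℝ)+c) := key3
    _ ≤ ∑ j ∈ range N, ∑ k ∈ range N,
          (1/Real.sqrt ((j:ℝ)+1)) * (1/Real.sqrt ((k:ℝ)+1)) / ((j:ℝ)+(k:ℝ)+θ) := key2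

lemma part2 {θ : ℝ} (hθ : 1/2 ≤ θ) (C : ℝ) (hC : C < π) :
    ∃ ξ : ℕ → ℝ, Summable (fun k => ξ k ^ 2) ∧ ξ ≠ 0 ∧
      C * ∑' k : ℕ, ξ k ^ 2 < ∑' p : ℕ × ℕ, ξ p.1 * ξ p.2 / ((p.1 : ℝ) + p.2 + θ) := by
  set C' : ℝ := max C 0 with hC'
  have hC'0 : 0 ≤ C' := le_max_right _ _
  have hC'π : C' < π := max_lt hC Real.pi_pos
  set ε : ℝ := π - C' with hεdef
  have hε : 0 < ε := by rw [hεdef]; linarith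
  have hεπ : ε ≤ π := by rw [hεdef]; linarith
  obtain ⟨N, hN0, hkey⟩ := part2_est hθ hε hεπ
  have hπε : π - ε = C' := by rw [hεdef]; ring
  rw [hπε] at hkey
  set ξ : ℕ → ℝ := fun i => if i < N then 1/Real.sqrt ((i:ℝ)+1) else 0 with hξ
  have hsq0 : ∀ i ∉ range N, ξ i ^ 2 = 0 := by
    intro i hi
    rw [Finset.mem_range] at hi
    rw [hξ]
    simp only [if_neg hi]
    norm_num
  have hsum : Summable (fun k => ξ k ^ 2) := summable_of_ne_finset_zero hsq0
  have htsum : ∑' k : ℕ, ξ k ^ 2 = ∑ k ∈ range N, 1/((k:ℝ)+1) := by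
    rw [tsum_eq_sum hsq0]
    refine Finset.sum_congr rfl fun k hk => ?_
    rw [Finset.mem_range] at hk
    rw [hξ]
    simp only [if_pos hk]
    rw [div_pow, one_pow, Real.sq_sqrt (by positivity)]
  have hne : ξ ≠ 0 := by
    intro h
    have h0 : ξ 0 = 0 := by rw [h]; rfl
    rw [hξ] at h0
    simp only [if_pos hN0] at h0
    rw [Nat.cast_zero, zero_add, Real.sqrt_one] at h0
    norm_num at h0
  have hf0 : ∀ p : ℕ × ℕ, p ∉ (range N) ×ˢ (range N) →
      ξ p.1 * ξ p.2 / ((p.1 : ℝ) + p.2 + θ) = 0 := by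
    intro p hp
    rw [Finset.mem_product] at hp
    push_neg at hp
    have : ξ p.1 * ξ p.2 = 0 := by
      by_cases h1 : p.1 ∈ range N
      · have h2 := hp h1
        rw [Finset.mem_range] at h2
        rw [hξ]
        simp only [if_neg h2]
        ring
      · rw [Finset.mem_range] at h1
        rw [hξ]
        simp only [if_neg h1]
        ring
    rw [this, zero_div]
  have htsumf : ∑' p : ℕ × ℕ, ξ p.1 * ξ p.2 / ((p.1 : ℝ) + p.2 + θ)
      = ∑ j ∈ range N, ∑ k ∈ range N,
          (1/Real.sqrt ((j:ℝ)+1)) * (1/Real.sqrt ((k:ℝ)+1)) / ((j:ℝ)+(k:ℝ)+θ) := by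
    rw [tsum_eq_sum hf0, Finset.sum_product]
    refine Finset.sum_congr rfl fun j hj => Finset.sum_congr rfl fun k hk => ?_
    rw [Finset.mem_range] at hj hk
    rw [hξ]
    simp only [if_pos hj, if_pos hk]
  have hSpos : 0 < ∑ k ∈ range N, 1/((k:ℝ)+1) := by
    apply Finset.sum_pos
    · intro k _
      positivity
    · exact Finset.nonempty_range_iff.2 (by omega)
  refine ⟨ξ, hsum, hne, ?_⟩
  rw [htsum, htsumf]
  calc C * ∑ k ∈ range N, 1/((k:ℝ)+1) ≤ C' * ∑ k ∈ range N, 1/((k:ℝ)+1) :=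
        mul_le_mul_of_nonneg_right (le_max_left _ _) hSpos.le
    _ < _ := hkey


/-- Hilbert's double series inequality for the generalized Hilbert matrix, `θ ≥ 1/2`:
the bound `π` holds and is best possible. -/
theorem hilbert_inequality (θ : ℝ) (hθ : 1 / 2 ≤ θ) :
    (∀ ξ : ℕ → ℝ, Summable (fun k => ξ k ^ 2) →
      Summable (fun p : ℕ × ℕ => ξ p.1 * ξ p.2 / ((p.1 : ℝ) + p.2 + θ)) ∧
      0 ≤ ∑' p : ℕ × ℕ, ξ p.1 * ξ p.2 / ((p.1 : ℝ) + p.2 + θ) ∧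
      ∑' p : ℕ × ℕ, ξ p.1 * ξ p.2 / ((p.1 : ℝ) + p.2 + θ) ≤ Real.pi * ∑' k : ℕ, ξ k ^ 2) ∧
    ∀ C : ℝ, C < Real.pi → ∃ ξ : ℕ → ℝ, Summable (fun k => ξ k ^ 2) ∧ ξ ≠ 0 ∧
      C * ∑' k : ℕ, ξ k ^ 2 < ∑' p : ℕ × ℕ, ξ p.1 * ξ p.2 / ((p.1 : ℝ) + p.2 + θ) := by
  have hθ' : 1/2 ≤ θ := hθ
  constructor
  · intro ξ hsum
    exact part1 hθ' ξ hsum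
  · intro C hC
    exact part2 hθ' C hC
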